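/- arXiv:2504.17864 — 2 statements merged into one kernel-verified Lean document; each statement's English description precedes it below -/
import Mathlib

section
/- Let G : ℝ^m → ℝ^n with nonempty zero set Z, x ∈ ℝ^m, H ∈ ℝ^{n×m} of full rank (n < m) with ‖H⁺‖ ≤ Ω, and let 𝓐 = {w | G(x) + H(w − x) = 0} and y = proj_𝓐 x. Suppose z̄ ∈ Z. Then ‖z̄ − proj_𝓐 z̄‖ ≤ Ω · ‖G(x) − H(x − z̄)‖. -/
/-- Moore–Penrose pseudo-inverse of a full-rank wide matrix: `H⁺ = Hᵀ (H Hᵀ)⁻¹`. -/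
noncomputable def Matrix.pinv {n m : ℕ} (A : Matrix (Fin n) (Fin m) ℝ) :
    Matrix (Fin m) (Fin n) ℝ :=
  A.transpose * (A * A.transpose)⁻¹

/-- Reinterpret a plain vector in `Fin k → ℝ` as a point of Euclidean space. -/
def toE {k : ℕ} (v : Fin k → ℝ) : EuclideanSpace ℝ (Fin k) := WithLp.toLp 2 v


lemma isUnit_of_rank_eq' {n : ℕ} (B : Matrix (Fin n) (Fin n) ℝ) (h : B.rank = n) : IsUnit B := by
  rw [← Matrix.mulVec_surjective_iff_isUnit]
  have htop : LinearMap.range B.mulVecLin = ⊤ := by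
    apply Submodule.eq_top_of_finrank_eq
    simpa [Matrix.rank] using h
  intro v
  obtain ⟨c, hc⟩ := LinearMap.mem_range.mp
    (htop ▸ Submodule.mem_top : v ∈ LinearMap.range B.mulVecLin)
  exact ⟨c, hc⟩

/-- let `G : ℝ^m → ℝ^n` have nonempty zero set `Z`, `x ∈ ℝ^m`,
`H ∈ ℝ^{n×m}` of full rank (`n < m`) with `‖H⁺‖ ≤ Ω`, and let
`𝓐 = {w | G(x) + H(w − x) = 0}`.  If `z̄ ∈ Z` and `q = proj_𝓐 z̄` is the Euclidean
projection of `z̄` onto `𝓐`, then `‖z̄ − q‖ ≤ Ω·‖G(x) − H(x − z̄)‖`. -/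
theorem stmt_13 {n m : ℕ} (hnm : n < m)
    (G : EuclideanSpace ℝ (Fin m) → EuclideanSpace ℝ (Fin n))
    (Z : Set (EuclideanSpace ℝ (Fin m))) (hZ : Z = {z | G z = 0}) (hZne : Z.Nonempty)
    (x : EuclideanSpace ℝ (Fin m))
    (H : Matrix (Fin n) (Fin m) ℝ) (hrank : H.rank = n) (Ω : ℝ)
    (hΩ : ∀ v : EuclideanSpace ℝ (Fin n), ‖toE (H.pinv.mulVec v)‖ ≤ Ω * ‖v‖)
    (zbar : EuclideanSpace ℝ (Fin m)) (hzbar : zbar ∈ Z)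
    (q : EuclideanSpace ℝ (Fin m))
    (hqmem : G x + toE (H.mulVec (q - x)) = 0)
    (hqmin : ∀ w : EuclideanSpace ℝ (Fin m), G x + toE (H.mulVec (w - x)) = 0 →
      ‖zbar - q‖ ≤ ‖zbar - w‖) :
    ‖zbar - q‖ ≤ Ω * ‖G x - toE (H.mulVec (x - zbar))‖ := by
  have hunit : IsUnit (H * H.transpose) :=
    isUnit_of_rank_eq' _ (by rw [Matrix.rank_self_mul_transpose]; exact hrank)
  have hHpinv : H * H.pinv = 1 := by
    rw [Matrix.pinv, ← Matrix.mul_assoc]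
    exact Matrix.mul_nonsing_inv _ ((Matrix.isUnit_iff_isUnit_det _).mp hunit)
  set v : EuclideanSpace ℝ (Fin n) := G x + toE (H.mulVec (zbar - x)) with hv
  set w : EuclideanSpace ℝ (Fin m) := zbar - toE (H.pinv.mulVec v) with hwdef
  have hHv : H.mulVec (H.pinv.mulVec v) = v := by
    rw [Matrix.mulVec_mulVec, hHpinv, Matrix.one_mulVec]
  have h1 : H.mulVec (w - x) = H.mulVec (zbar - x) - H.mulVec (H.pinv.mulVec v) := by
    rw [← Matrix.mulVec_sub]
    apply congrArg
    funext i
    simp [hwdef, toE]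
    ring
  have hw : G x + toE (H.mulVec (w - x)) = 0 := by
    have h2 : toE (H.mulVec (w - x)) = toE (H.mulVec (zbar - x)) - v := by
      rw [h1, hHv]; rfl
    rw [h2, hv]
    abel
  have hle := hqmin w hw
  have h3 : zbar - w = toE (H.pinv.mulVec v) := by
    rw [hwdef]; abel
  have h4 : toE (H.mulVec (x - zbar)) = - toE (H.mulVec (zbar - x)) := by
    have h5 : H.mulVec (x - zbar) = - H.mulVec (zbar - x) := by
      rw [← Matrix.mulVec_neg]
      apply congrArg
      funext i
      simp
    rw [h5]; rfl
  calc ‖zbar - q‖ ≤ ‖zbar - w‖ := hle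
    _ = ‖toE (H.pinv.mulVec v)‖ := by rw [h3]
    _ ≤ Ω * ‖v‖ := hΩ v
    _ = Ω * ‖G x - toE (H.mulVec (x - zbar))‖ := by
        rw [h4, sub_neg_eq_add, hv]
end

section
/- Let G : ℝ^m → ℝ^n (n < m) be L-Lipschitz and uniformly Newton differentiable on its nonempty zero set Z with Newton differential 𝓗G such that every H ∈ 𝓗G(x) has full rank and sup{‖H⁺‖ : H ∈ 𝓗G(x), x ∈ ℝ^m} ≤ Ω < ∞. Assume proj_Z is single-valued and L_Z-Lipschitz, and 𝓗G is geometrically compatible with Z with constant P. Then there exist a neighborhood V of Z and constants such that for every x ∈ V, every H ∈ 𝓗G(x), and y = proj_{𝓐(x,H)} x, one has dist(y, Z) ≤ c(x) · P Ω (1 + L_Z L Ω) · dist(x, Z), where c(x) = sup_{z̄ ∈ Z} sup_{H ∈ 𝓗G(x)} ‖G(x) − H(x − z̄)‖/‖x − z̄‖; in particular iterates x^{k+1} ∈ 𝓝_{𝓗G}(x^k) started near Z satisfy dist(x^{k+1}, Z) ≤ c^k dist(x^k, Z) with c^k → 0. -/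
open Metric

/-- Reinterpret a point of Euclidean space as a plain vector in `Fin k → ℝ`. -/
def fromE {k : ℕ} (v : EuclideanSpace ℝ (Fin k)) : Fin k → ℝ := v

open scoped RealInnerProductSpace

lemma toE_zero {k : ℕ} : toE (0 : Fin k → ℝ) = 0 := rfl
lemma toE_sub {k : ℕ} (v w : Fin k → ℝ) : toE (v - w) = toE v - toE w := rfl
lemma toE_neg {k : ℕ} (v : Fin k → ℝ) : toE (-v) = -toE v := rfl
lemma fromE_sub {k : ℕ} (v w : EuclideanSpace ℝ (Fin k)) : fromE (v - w) = fromE v - fromE w := rfl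
lemma toE_fromE {k : ℕ} (v : EuclideanSpace ℝ (Fin k)) : toE (fromE v) = v := rfl
lemma fromE_toE {k : ℕ} (v : Fin k → ℝ) : fromE (toE v) = v := rfl

lemma pinv_right_inv {n m : ℕ} (H : Matrix (Fin n) (Fin m) ℝ) (h : H.rank = n) :
    H * H.pinv = 1 := by
  have hrk : (H * H.transpose).rank = n := by rw [Matrix.rank_self_mul_transpose, h]
  have hsurj : Function.Surjective (H * H.transpose).mulVec := by
    have htop : LinearMap.range (H * H.transpose).mulVecLin = ⊤ := by
      apply Submodule.eq_top_of_finrank_eq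
      rw [Module.finrank_pi]
      simpa [Matrix.rank] using hrk
    intro y
    have : y ∈ LinearMap.range (H * H.transpose).mulVecLin := htop ▸ Submodule.mem_top
    obtain ⟨v, hv⟩ := this
    exact ⟨v, hv⟩
  have hu : IsUnit (H * H.transpose) := Matrix.mulVec_surjective_iff_isUnit.mp hsurj
  have hinv : (H * H.transpose) * (H * H.transpose)⁻¹ = 1 :=
    Matrix.mul_nonsing_inv _ ((Matrix.isUnit_iff_isUnit_det _).mp hu)
  calc H * H.pinv = (H * H.transpose) * (H * H.transpose)⁻¹ := by
        rw [Matrix.pinv, Matrix.mul_assoc]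
    _ = 1 := hinv
set_option maxHeartbeats 1000000 in
/-- A closed set in Euclidean space admitting a Lipschitz nearest-point selection is
convex (a gradient-descent proof of the Bunt–Motzkin theorem). -/
lemma lipschitz_proj_convex {m : ℕ} (Z : Set (EuclideanSpace ℝ (Fin m))) (hZc : IsClosed Z)
    (P : EuclideanSpace ℝ (Fin m) → EuclideanSpace ℝ (Fin m)) (hmem : ∀ w, P w ∈ Z)
    (hmin : ∀ w, ∀ z ∈ Z, ‖w - P w‖ ≤ ‖w - z‖) (LZ : ℝ)
    (hLip : ∀ a b, ‖P a - P b‖ ≤ LZ * ‖a - b‖) :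
    ∀ z1 ∈ Z, ∀ z2 ∈ Z, ∀ t : ℝ, 0 ≤ t → t ≤ 1 → z1 + t • (z2 - z1) ∈ Z := by
  intro z1 hz1 z2 hz2 t ht0 ht1
  obtain ⟨L', hL'pos, hLip'⟩ :
      ∃ L' : ℝ, 0 < L' ∧ ∀ a b, ‖P a - P b‖ ≤ L' * ‖a - b‖ := by
    refine ⟨|LZ| + 1, by positivity, fun a b => (hLip a b).trans ?_⟩
    apply mul_le_mul_of_nonneg_right _ (norm_nonneg _)
    cases abs_cases LZ <;> linarith
  obtain ⟨s, hspos, hLs⟩ : ∃ s : ℝ, 0 < s ∧ L' * s = 1 / 2 :=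
    ⟨1 / (2 * L'), by positivity, by field_simp⟩
  set z0 : EuclideanSpace ℝ (Fin m) := z1 + t • (z2 - z1) with hz0def
  obtain ⟨f, hfeq⟩ :
      ∃ f : EuclideanSpace ℝ (Fin m) → ℝ,
        ∀ v, f v = (‖v‖ ^ 2 - ‖v - P v‖ ^ 2) / 2 - ⟪v, z0⟫ :=
    ⟨_, fun v => rfl⟩
  -- lower bound for f against any z ∈ Z
  have hsub : ∀ v : EuclideanSpace ℝ (Fin m), ∀ z ∈ Z,
      ⟪v, z - z0⟫ - ‖z‖ ^ 2 / 2 ≤ f v := by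
    intro v z hz
    have h1 : ‖v - P v‖ ^ 2 ≤ ‖v - z‖ ^ 2 :=
      pow_le_pow_left₀ (norm_nonneg _) (hmin v z hz) 2
    rw [norm_sub_sq_real v z] at h1
    rw [hfeq, inner_sub_right]
    linarith
  -- uniform lower bound for f
  have hlb : ∀ v, -(((1 - t) * ‖z1‖ ^ 2 + t * ‖z2‖ ^ 2) / 2) ≤ f v := by
    intro v
    have h1 := hsub v z1 hz1
    have h2 := hsub v z2 hz2
    have hcomb : (1 - t) • (z1 - z0) + t • (z2 - z0) = (0 : EuclideanSpace ℝ (Fin m)) := by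
      rw [hz0def]; module
    have hinner : (1 - t) * ⟪v, z1 - z0⟫ + t * ⟪v, z2 - z0⟫ = 0 := by
      rw [← real_inner_smul_right, ← real_inner_smul_right, ← inner_add_right, hcomb,
        inner_zero_right]
    nlinarith [mul_le_mul_of_nonneg_left h1 (by linarith : (0:ℝ) ≤ 1 - t),
      mul_le_mul_of_nonneg_left h2 ht0]
  -- the one-step descent estimate
  have hdesc : ∀ v, f (v - s • (P v - z0)) ≤ f v - s / 2 * ‖P v - z0‖ ^ 2 := by
    intro v
    have key : ∀ u : EuclideanSpace ℝ (Fin m), f u - f v ≤ ⟪u - v, P u - z0⟫ := by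
      intro u
      have hm : ‖v - P v‖ ^ 2 ≤ ‖v - P u‖ ^ 2 :=
        pow_le_pow_left₀ (norm_nonneg _) (hmin v (P u) (hmem u)) 2
      rw [hfeq, hfeq]
      rw [norm_sub_sq_real u (P u)]
      rw [norm_sub_sq_real v (P u)] at hm
      simp only [inner_sub_left, inner_sub_right]
      linarith
    have key2 := key (v - s • (P v - z0))
    set u : EuclideanSpace ℝ (Fin m) := v - s • (P v - z0) with hudef
    have huv : u - v = -(s • (P v - z0)) := by rw [hudef]; abel
    have hnuv : ‖u - v‖ = s * ‖P v - z0‖ := by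
      rw [huv, norm_neg, norm_smul, Real.norm_eq_abs, abs_of_pos hspos]
    have hPuPv : ‖P u - P v‖ ≤ L' * (s * ‖P v - z0‖) := by
      have := hLip' u v
      rwa [hnuv] at this
    have hsplit : ⟪u - v, P u - z0⟫
        = -(s * ⟪P v - z0, P v - z0⟫) - s * ⟪P v - z0, P u - P v⟫ := by
      rw [huv]
      have h7 : P u - z0 = (P v - z0) + (P u - P v) := by abel
      rw [h7]
      simp only [inner_add_right, inner_neg_left, real_inner_smul_left]
      ring
    have hcs : -(‖P v - z0‖ * ‖P u - P v‖) ≤ ⟪P v - z0, P u - P v⟫ := by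
      have := abs_real_inner_le_norm (P v - z0) (P u - P v)
      cases abs_cases (⟪P v - z0, P u - P v⟫) <;> linarith
    have hself : ⟪P v - z0, P v - z0⟫ = ‖P v - z0‖ ^ 2 := real_inner_self_eq_norm_sq _
    have h4 : -(‖P v - z0‖ * (L' * (s * ‖P v - z0‖))) ≤ ⟪P v - z0, P u - P v⟫ := by
      have h5 : ‖P v - z0‖ * ‖P u - P v‖ ≤ ‖P v - z0‖ * (L' * (s * ‖P v - z0‖)) :=
        mul_le_mul_of_nonneg_left hPuPv (norm_nonneg _)
      linarith
    have h3 : -(s * (‖P v - z0‖ * (L' * (s * ‖P v - z0‖)))) ≤ s * ⟪P v - z0, P u - P v⟫ := by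
      have := mul_le_mul_of_nonneg_left h4 hspos.le
      linarith
    have h6 : s * (‖P v - z0‖ * (L' * (s * ‖P v - z0‖))) = (L' * s) * (s * ‖P v - z0‖ ^ 2) := by
      ring
    rw [hLs] at h6
    have hfin : ⟪u - v, P u - z0⟫ ≤ -(s / 2) * ‖P v - z0‖ ^ 2 := by
      rw [hsplit, hself]
      nlinarith [h3, h6]
    nlinarith [key2, hfin]
  -- the gradient-descent sequence
  let w : ℕ → EuclideanSpace ℝ (Fin m) := fun k =>
    Nat.rec z0 (fun _ v => v - s • (P v - z0)) k
  have hw0 : w 0 = z0 := rfl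
  have hwS : ∀ k, w (k + 1) = w k - s • (P (w k) - z0) := fun k => rfl
  -- z0 is in the closure of Z
  have hclose : ∀ ε > (0:ℝ), ∃ z ∈ Z, dist z0 z < ε := by
    intro ε hε
    by_contra hcon
    push_neg at hcon
    have hfar : ∀ k, ε ≤ ‖P (w k) - z0‖ := by
      intro k
      have := hcon (P (w k)) (hmem (w k))
      rw [dist_eq_norm, ← norm_neg] at this
      simpa [neg_sub] using this
    have hstepdec : ∀ k, f (w (k + 1)) ≤ f (w k) - s / 2 * ε ^ 2 := by
      intro k
      have h1 := hdesc (w k)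
      have h2 : s / 2 * ε ^ 2 ≤ s / 2 * ‖P (w k) - z0‖ ^ 2 := by
        apply mul_le_mul_of_nonneg_left _ (by positivity)
        exact pow_le_pow_left₀ hε.le (hfar k) 2
      rw [← hwS k] at h1
      linarith
    have hiter : ∀ k : ℕ, f (w k) ≤ f z0 - k * (s / 2 * ε ^ 2) := by
      intro k
      induction k with
      | zero => simp [hw0]
      | succ k ih =>
        have := hstepdec k
        push_cast
        push_cast at ih
        linarith
    obtain ⟨k, hk⟩ :=
      exists_nat_gt ((f z0 + ((1 - t) * ‖z1‖ ^ 2 + t * ‖z2‖ ^ 2) / 2) / (s / 2 * ε ^ 2))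
    have hpos : 0 < s / 2 * ε ^ 2 := by positivity
    have hA := hlb (w k)
    have hB := hiter k
    have hC : (k : ℝ) * (s / 2 * ε ^ 2) ≤ f z0 + ((1 - t) * ‖z1‖ ^ 2 + t * ‖z2‖ ^ 2) / 2 := by
      linarith
    have hD := (div_lt_iff₀ hpos).mp hk
    linarith
  have : z0 ∈ closure Z := by
    rw [Metric.mem_closure_iff]
    exact hclose
  rwa [hZc.closure_eq] at this


/-- The local Newton-differentiability constant
`c(x) = sup_{z̄ ∈ Z} sup_{H ∈ 𝓗G(x)} ‖G(x) − H(x − z̄)‖ / ‖x − z̄‖`. -/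
noncomputable def newtonConst {n m : ℕ}
    (G : EuclideanSpace ℝ (Fin m) → EuclideanSpace ℝ (Fin n))
    (HG : EuclideanSpace ℝ (Fin m) → Set (Matrix (Fin n) (Fin m) ℝ))
    (Z : Set (EuclideanSpace ℝ (Fin m))) (x : EuclideanSpace ℝ (Fin m)) : ℝ :=
  sSup {r : ℝ | ∃ zbar ∈ Z, ∃ H ∈ HG x,
    r = ‖G x - toE (H.mulVec (x - zbar))‖ / ‖x - zbar‖}

set_option maxHeartbeats 1600000

/-- super-linear convergence of the under-determined Newton method.
`G : ℝ^m → ℝ^n` (`n < m`) is `L`-Lipschitz and uniformly Newton differentiable on its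
nonempty zero set `Z` with Newton differential `𝓗G`, all `H ∈ 𝓗G(x)` have full rank,
`‖H⁺‖ ≤ Ω` uniformly, `projZ` is the single-valued `L_Z`-Lipschitz projection onto `Z`,
`projA x H` is the Euclidean projection onto the affine set
`𝓐(x,H) = {w | G(x) + H(w − x) = 0}`, and `𝓗G` is geometrically compatible with `Z`
with constant `P ≥ 1`.  Then there is a neighborhood `V` of `Z` such that one Newton
step from `x ∈ V` satisfies
`dist(projA x H x, Z) ≤ c(x)·P·Ω·(1 + L_Z·L·Ω)·dist(x, Z)`, and any iterate sequence
started in `V` satisfies `dist(x^{k+1}, Z) ≤ c^k·dist(x^k, Z)` with `c^k → 0`. -/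
theorem stmt_14 {n m : ℕ} (hnm : n < m)
    (G : EuclideanSpace ℝ (Fin m) → EuclideanSpace ℝ (Fin n)) (L : ℝ)
    (hL : ∀ a b : EuclideanSpace ℝ (Fin m), ‖G a - G b‖ ≤ L * ‖a - b‖)
    (Z : Set (EuclideanSpace ℝ (Fin m))) (hZ : Z = {z | G z = 0}) (hZne : Z.Nonempty)
    (HG : EuclideanSpace ℝ (Fin m) → Set (Matrix (Fin n) (Fin m) ℝ))
    (hHGne : ∀ x, (HG x).Nonempty)
    (hrank : ∀ x, ∀ H ∈ HG x, H.rank = n)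
    (Ω : ℝ) (hΩpos : 0 < Ω)
    (hΩ : ∀ x, ∀ H ∈ HG x, ∀ v : EuclideanSpace ℝ (Fin n),
      ‖toE (H.pinv.mulVec v)‖ ≤ Ω * ‖v‖)
    -- uniform Newton differentiability of `G` on `Z`
    (hND : ∀ ε > 0, ∃ δ > 0, ∀ x : EuclideanSpace ℝ (Fin m), ∀ zbar ∈ Z,
      ‖x - zbar‖ ≤ δ → ∀ H ∈ HG x,
        ‖G x - toE (H.mulVec (x - zbar))‖ ≤ ε * ‖x - zbar‖)
    -- single-valued Lipschitz projection onto `Z`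
    (projZ : EuclideanSpace ℝ (Fin m) → EuclideanSpace ℝ (Fin m))
    (hprojZmem : ∀ w, projZ w ∈ Z)
    (hprojZmin : ∀ w, ∀ z ∈ Z, ‖w - projZ w‖ ≤ ‖w - z‖)
    (LZ : ℝ)
    (hprojZLip : ∀ a b : EuclideanSpace ℝ (Fin m),
      ‖projZ a - projZ b‖ ≤ LZ * ‖a - b‖)
    -- Euclidean projection onto the affine sets `𝓐(x, H)`
    (projA : EuclideanSpace ℝ (Fin m) → Matrix (Fin n) (Fin m) ℝ →
      EuclideanSpace ℝ (Fin m) → EuclideanSpace ℝ (Fin m))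
    (hprojAmem : ∀ x, ∀ H ∈ HG x, ∀ w,
      G x + toE (H.mulVec (fromE (projA x H w - x))) = 0)
    (hprojAmin : ∀ x, ∀ H ∈ HG x, ∀ w u,
      G x + toE (H.mulVec (fromE (u - x))) = 0 → ‖w - projA x H w‖ ≤ ‖w - u‖)
    -- geometric compatibility of `𝓗G` with `Z`, with constant `P ≥ 1`
    (P : ℝ) (hP : 1 ≤ P)
    (hgc : ∃ δ > 0, ∀ x : EuclideanSpace ℝ (Fin m), infDist x Z < δ →
      ∀ H ∈ HG x,
        ‖projA x H x - projZ (projA x H x)‖ ≤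
          P * ‖projZ (projA x H x) - projA x H (projZ (projA x H x))‖) :
    ∃ V : Set (EuclideanSpace ℝ (Fin m)), IsOpen V ∧ Z ⊆ V ∧
      (∀ x ∈ V, ∀ H ∈ HG x,
        infDist (projA x H x) Z ≤
          newtonConst G HG Z x * (P * Ω * (1 + LZ * L * Ω)) * infDist x Z) ∧
      (∀ xs : ℕ → EuclideanSpace ℝ (Fin m), xs 0 ∈ V →
        (∀ k, ∃ H ∈ HG (xs k), xs (k + 1) = projA (xs k) H (xs k)) →
        ∃ c : ℕ → ℝ, Filter.Tendsto c Filter.atTop (nhds 0) ∧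
          ∀ k, infDist (xs (k + 1)) Z ≤ c k * infDist (xs k) Z) := by
  obtain ⟨δgc, hδgc0, hgc⟩ := hgc
  obtain ⟨δ1, hδ10, hND1⟩ := hND 1 one_pos
  -- nonnegativity of the Lipschitz constants
  have hm0 : 0 < m := lt_of_le_of_lt (Nat.zero_le n) hnm
  have he1 : ‖(EuclideanSpace.single (⟨0, hm0⟩ : Fin m) (1:ℝ) :
      EuclideanSpace ℝ (Fin m))‖ = 1 := by
    rw [EuclideanSpace.norm_single]; norm_num
  have hL0 : 0 ≤ L := by
    have h := hL (EuclideanSpace.single (⟨0, hm0⟩ : Fin m) (1:ℝ)) 0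
    rw [sub_zero, he1, mul_one] at h
    exact le_trans (norm_nonneg _) h
  have hLZ0 : 0 ≤ LZ := by
    have h := hprojZLip (EuclideanSpace.single (⟨0, hm0⟩ : Fin m) (1:ℝ)) 0
    rw [sub_zero, he1, mul_one] at h
    exact le_trans (norm_nonneg _) h
  have hP0 : 0 ≤ P := le_trans zero_le_one hP
  -- Z is closed
  have hGcont : Continuous G := by
    apply (LipschitzWith.of_dist_le_mul (K := Real.toNNReal L) (f := G) ?_).continuous
    intro a b
    rw [dist_eq_norm, dist_eq_norm]
    calc ‖G a - G b‖ ≤ L * ‖a - b‖ := hL a b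
      _ ≤ Real.toNNReal L * ‖a - b‖ :=
          mul_le_mul_of_nonneg_right (Real.le_coe_toNNReal L) (norm_nonneg _)
  have hZclosed : IsClosed Z := by
    rw [hZ]
    exact isClosed_eq hGcont continuous_const
  -- G vanishes on Z
  have hGz : ∀ z ∈ Z, G z = 0 := by
    intro z hz; rw [hZ] at hz; exact hz
  -- projZ is the nearest point
  have hPZ : ∀ w, ‖w - projZ w‖ = infDist w Z := by
    intro w
    apply le_antisymm
    · by_contra hcon
      push_neg at hcon
      obtain ⟨y, hy, hlt⟩ := (infDist_lt_iff hZne).mp hcon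
      rw [dist_eq_norm] at hlt
      exact absurd (hprojZmin w y hy) (by linarith)
    · rw [← dist_eq_norm]
      exact infDist_le_dist_of_mem (hprojZmem w)
  have hPid : ∀ z ∈ Z, projZ z = z := by
    intro z hz
    have h := hprojZmin z z hz
    rw [sub_self, norm_zero] at h
    have := norm_le_zero_iff.mp h
    rw [sub_eq_zero] at this
    exact this.symm
  -- Z is convex
  have hconv := lipschitz_proj_convex Z hZclosed projZ hprojZmem hprojZmin LZ hprojZLip
  -- H * H⁺ = 1
  have hHH : ∀ x, ∀ H ∈ HG x, H * H.pinv = 1 := fun x H hH => pinv_right_inv H (hrank x H hH)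
  -- rewriting the affine constraint
  have hrew : ∀ (H : Matrix (Fin n) (Fin m) ℝ) (x w : EuclideanSpace ℝ (Fin m)),
      G x + toE (H.mulVec (fromE (w - x))) = G x - toE (H.mulVec (x - w)) := by
    intro H x w
    have h1 : fromE (w - x) = -(fromE (x - w)) := by
      rw [fromE_sub, fromE_sub]; abel
    rw [h1, Matrix.mulVec_neg, toE_neg, ← sub_eq_add_neg]
    rfl
  -- distance to the affine set is controlled by the residual
  have hdA : ∀ x, ∀ H ∈ HG x, ∀ w : EuclideanSpace ℝ (Fin m),
      ‖w - projA x H w‖ ≤ Ω * ‖G x - toE (H.mulVec (x - w))‖ := by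
    intro x H hH w
    set q : EuclideanSpace ℝ (Fin n) := G x - toE (H.mulVec (x - w)) with hq
    set u : EuclideanSpace ℝ (Fin m) := w - toE (H.pinv.mulVec (fromE q)) with hu
    have hfeas : G x + toE (H.mulVec (fromE (u - x))) = 0 := by
      have h1 : fromE (u - x) = fromE (w - x) - H.pinv.mulVec (fromE q) := by
        rw [hu, sub_right_comm, fromE_sub, fromE_toE]
      rw [h1, Matrix.mulVec_sub, Matrix.mulVec_mulVec, hHH x H hH, Matrix.one_mulVec,
        toE_sub, toE_fromE, hq]
      have h2 := hrew H x w
      rw [sub_eq_add_neg (G x)] at h2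
      have hT := add_left_cancel h2
      rw [hT]
      abel
    calc ‖w - projA x H w‖ ≤ ‖w - u‖ := hprojAmin x H hH w u hfeas
      _ = ‖toE (H.pinv.mulVec (fromE q))‖ := by rw [hu, sub_sub_cancel]
      _ ≤ Ω * ‖q‖ := hΩ x H hH q
  -- a Newton step from a zero stays put
  have hfix : ∀ x ∈ Z, ∀ H ∈ HG x, projA x H x = x := by
    intro x hx H hH
    have hfeas : G x + toE (H.mulVec (fromE (x - x))) = 0 := by
      rw [sub_self]
      show G x + toE (H.mulVec 0) = 0
      rw [Matrix.mulVec_zero, toE_zero, add_zero]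
      exact hGz x hx
    have h := hprojAmin x H hH x x hfeas
    rw [sub_self, norm_zero] at h
    have := norm_le_zero_iff.mp h
    rw [sub_eq_zero] at this
    exact this.symm
  -- the constants
  set A : ℝ := 1 + LZ * L * Ω with hAdef
  clear_value A
  have hA1 : 1 ≤ A := by
    have h0 : 0 ≤ LZ * L * Ω := mul_nonneg (mul_nonneg hLZ0 hL0) hΩpos.le
    rw [hAdef]; linarith
  have hA0 : 0 < A := lt_of_lt_of_le one_pos hA1
  set K' : ℝ := P * Ω * A with hK'def
  clear_value K'
  have hK'pos : 0 < K' := by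
    rw [hK'def]; exact mul_pos (mul_pos (lt_of_lt_of_le one_pos hP) hΩpos) hA0
  -- the deviation of a Newton step
  have hxzs_le : ∀ x : EuclideanSpace ℝ (Fin m), ∀ H ∈ HG x,
      ‖x - projZ (projA x H x)‖ ≤ A * infDist x Z := by
    intro x H hH
    have hdnn : (0:ℝ) ≤ infDist x Z := infDist_nonneg
    have hGx : ‖G x‖ ≤ L * infDist x Z := by
      have h := hL x (projZ x)
      rw [hGz (projZ x) (hprojZmem x), sub_zero] at h
      rwa [hPZ x] at h
    have hxy : ‖x - projA x H x‖ ≤ Ω * (L * infDist x Z) := by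
      have h := hdA x H hH x
      rw [sub_self] at h
      rw [Matrix.mulVec_zero, toE_zero, sub_zero] at h
      exact h.trans (mul_le_mul_of_nonneg_left hGx hΩpos.le)
    have h3 : ‖x - projZ (projA x H x)‖ ≤ ‖x - projZ x‖ + ‖projZ x - projZ (projA x H x)‖ := by
      have h := norm_add_le (x - projZ x) (projZ x - projZ (projA x H x))
      rw [sub_add_sub_cancel] at h; exact h
    have h4 : ‖projZ x - projZ (projA x H x)‖ ≤ LZ * (Ω * (L * infDist x Z)) :=
      (hprojZLip x (projA x H x)).trans (mul_le_mul_of_nonneg_left hxy hLZ0)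
    have h5 : A * infDist x Z = infDist x Z + LZ * (Ω * (L * infDist x Z)) := by
      rw [hAdef]; ring
    rw [hPZ x] at h3
    linarith
  -- the core estimate for one Newton step
  have hcore : ∀ x : EuclideanSpace ℝ (Fin m), infDist x Z < δgc → ∀ H ∈ HG x, ∀ C : ℝ, 0 ≤ C →
      ‖G x - toE (H.mulVec (x - projZ (projA x H x)))‖ ≤ C * ‖x - projZ (projA x H x)‖ →
      infDist (projA x H x) Z ≤ C * K' * infDist x Z := by
    intro x hx1 H hH C hC hres
    have hres2 : ‖G x - toE (H.mulVec (x - projZ (projA x H x)))‖ ≤ C * (A * infDist x Z) :=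
      hres.trans (mul_le_mul_of_nonneg_left (hxzs_le x H hH) hC)
    calc infDist (projA x H x) Z ≤ dist (projA x H x) (projZ (projA x H x)) :=
          infDist_le_dist_of_mem (hprojZmem _)
      _ = ‖projA x H x - projZ (projA x H x)‖ := dist_eq_norm _ _
      _ ≤ P * ‖projZ (projA x H x) - projA x H (projZ (projA x H x))‖ := hgc x hx1 H hH
      _ ≤ P * (Ω * ‖G x - toE (H.mulVec (x - projZ (projA x H x)))‖) :=
          mul_le_mul_of_nonneg_left (hdA x H hH _) hP0
      _ ≤ P * (Ω * (C * (A * infDist x Z))) :=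
          mul_le_mul_of_nonneg_left (mul_le_mul_of_nonneg_left hres2 hΩpos.le) hP0
      _ = C * K' * infDist x Z := by rw [hK'def]; ring
  -- choice of the neighborhood
  obtain ⟨δ2, hδ20, hND2⟩ := hND (1 / (2 * K')) (by positivity)
  set δs : ℝ := min (min (δ1 / 4) (δgc / 2)) (δ2 / (2 * A)) with hδsdef
  have hδs0 : 0 < δs := by
    apply lt_min (lt_min (by linarith) (by linarith))
    positivity
  have hδs1 : δs ≤ δ1 / 4 := le_trans (min_le_left _ _) (min_le_left _ _)
  have hδsgc : δs < δgc :=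
    lt_of_le_of_lt (le_trans (min_le_left _ _) (min_le_right _ _)) (by linarith)
  have hδs2 : A * δs ≤ δ2 := by
    have h := min_le_right (min (δ1/4) (δgc/2)) (δ2 / (2*A))
    have h2 : A * δs ≤ A * (δ2 / (2*A)) :=
      mul_le_mul_of_nonneg_left (le_trans (min_le_right _ _) (le_refl _)) hA0.le
    have h3 : A * (δ2 / (2*A)) = δ2 / 2 := by field_simp
    linarith
  refine ⟨{x | infDist x Z < δs}, ?_, ?_, ?_, ?_⟩
  · exact isOpen_lt (continuous_infDist_pt Z) continuous_const
  · intro z hz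
    show infDist z Z < δs
    rw [infDist_zero_of_mem hz]
    exact hδs0
  · -- Statement (i): one Newton step with the Newton-differentiability constant
    intro x hx H hH
    by_cases hxZ : x ∈ Z
    · rw [hfix x hxZ H hH, infDist_zero_of_mem hxZ, mul_zero]
    · have hd : infDist x Z < δs := hx
      have hd14 : infDist x Z ≤ δ1 / 4 := le_of_lt (lt_of_lt_of_le hd hδs1)
      set S : Set ℝ := {r : ℝ | ∃ zbar ∈ Z, ∃ H' ∈ HG x,
        r = ‖G x - toE (H'.mulVec (x - zbar))‖ / ‖x - zbar‖} with hSdef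
      have hnc : newtonConst G HG Z x = sSup S := rfl
      -- the ratio set is bounded above by 6
      have hBdd : BddAbove S := by
        refine ⟨6, ?_⟩
        rintro r ⟨zbar, hzbar, H', hH', rfl⟩
        have hxzbar : x ≠ zbar := fun h => hxZ (h ▸ hzbar)
        have hpos : 0 < ‖x - zbar‖ := by
          rw [norm_pos_iff]; exact sub_ne_zero.mpr hxzbar
        by_cases hnear : ‖x - zbar‖ ≤ δ1
        · have h := hND1 x zbar hzbar hnear H' hH'
          rw [one_mul] at h
          rw [div_le_iff₀ hpos]
          nlinarith [hpos]
        · push_neg at hnear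
          have hz'Z : projZ x ∈ Z := hprojZmem x
          have hdz' : ‖x - projZ x‖ = infDist x Z := hPZ x
          have hd14' : ‖x - projZ x‖ ≤ δ1/4 := by rw [hdz']; exact hd14
          have hzz'_ge : ‖x - zbar‖ - δ1/4 ≤ ‖zbar - projZ x‖ := by
            have htri : ‖x - zbar‖ ≤ ‖x - projZ x‖ + ‖projZ x - zbar‖ := by
              have h := norm_add_le (x - projZ x) (projZ x - zbar)
              rw [sub_add_sub_cancel] at h; exact h
            rw [norm_sub_rev zbar (projZ x)]
            linarith
          have hzz'pos : 0 < ‖zbar - projZ x‖ := by linarith [hδ10]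
          set τ : ℝ := δ1 / (2 * ‖zbar - projZ x‖) with hτdef
          have hτpos : 0 < τ := by positivity
          have hτle : τ ≤ 1 := by
            rw [hτdef, div_le_one (by positivity)]
            linarith
          have hzτZ : projZ x + τ • (zbar - projZ x) ∈ Z :=
            hconv (projZ x) hz'Z zbar hzbar τ hτpos.le hτle
          have hτnorm : ‖τ • (zbar - projZ x)‖ = δ1 / 2 := by
            rw [norm_smul, Real.norm_eq_abs, abs_of_pos hτpos, hτdef]
            field_simp [ne_of_gt hzz'pos]
          have hxzτ : ‖x - (projZ x + τ • (zbar - projZ x))‖ ≤ δ1 := by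
            have h7 : x - (projZ x + τ • (zbar - projZ x))
                = (x - projZ x) - τ • (zbar - projZ x) := by abel
            rw [h7]
            calc ‖(x - projZ x) - τ • (zbar - projZ x)‖
                ≤ ‖x - projZ x‖ + ‖τ • (zbar - projZ x)‖ := norm_sub_le _ _
              _ ≤ δ1/4 + δ1/2 := by rw [hτnorm]; linarith
              _ ≤ δ1 := by linarith
          have h1 := hND1 x _ hzτZ hxzτ H' hH'
          have h1' : ‖G x - toE (H'.mulVec (x - (projZ x + τ • (zbar - projZ x))))‖ ≤ δ1 := by
            rw [one_mul] at h1; exact h1.trans hxzτ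
          have h2 := hND1 x (projZ x) hz'Z (by linarith) H' hH'
          have h2' : ‖G x - toE (H'.mulVec (x - projZ x))‖ ≤ δ1 / 4 := by
            rw [one_mul] at h2; exact h2.trans hd14'
          have hdiff : toE (H'.mulVec (x - projZ x))
              - toE (H'.mulVec (x - (projZ x + τ • (zbar - projZ x))))
              = τ • toE (H'.mulVec (zbar - projZ x)) := by
            rw [← toE_sub, ← Matrix.mulVec_sub]
            rw [show x.ofLp - (projZ x).ofLp - (x.ofLp - ((projZ x).ofLp + τ • (zbar.ofLp - (projZ x).ofLp)))
                = τ • (zbar.ofLp - (projZ x).ofLp) from by abel]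
            rw [Matrix.mulVec_smul]
            rfl
          have h9 : ‖toE (H'.mulVec (x - projZ x))
              - toE (H'.mulVec (x - (projZ x + τ • (zbar - projZ x))))‖ ≤ δ1 + δ1/4 := by
            have heq : toE (H'.mulVec (x - projZ x))
                - toE (H'.mulVec (x - (projZ x + τ • (zbar - projZ x))))
                = (G x - toE (H'.mulVec (x - (projZ x + τ • (zbar - projZ x)))))
                  - (G x - toE (H'.mulVec (x - projZ x))) := by abel
            rw [heq]
            calc ‖_ - _‖ ≤ ‖G x - toE (H'.mulVec (x - (projZ x + τ • (zbar - projZ x))))‖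
                + ‖G x - toE (H'.mulVec (x - projZ x))‖ := norm_sub_le _ _
              _ ≤ δ1 + δ1/4 := add_le_add h1' h2'
          have hHbound : τ * ‖toE (H'.mulVec (zbar - projZ x))‖ ≤ 2 * δ1 := by
            rw [hdiff] at h9
            rw [norm_smul, Real.norm_eq_abs, abs_of_pos hτpos] at h9
            linarith
          have hfar_bound : ‖toE (H'.mulVec (zbar - projZ x))‖ ≤ 4 * ‖zbar - projZ x‖ := by
            rw [hτdef, div_mul_eq_mul_div, div_le_iff₀ (by positivity)] at hHbound
            nlinarith [hδ10, norm_nonneg (toE (H'.mulVec (zbar - projZ x)))]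
          have h10 : toE (H'.mulVec (x - projZ x)) - toE (H'.mulVec (zbar - projZ x))
              = toE (H'.mulVec (x - zbar)) := by
            rw [← toE_sub, ← Matrix.mulVec_sub]
            rw [sub_sub_sub_cancel_right]
          have h11 : ‖G x - toE (H'.mulVec (x - zbar))‖
              ≤ ‖G x - toE (H'.mulVec (x - projZ x))‖ + ‖toE (H'.mulVec (zbar - projZ x))‖ := by
            have heq2 : G x - toE (H'.mulVec (x - zbar))
                = (G x - toE (H'.mulVec (x - projZ x))) + toE (H'.mulVec (zbar - projZ x)) := by
              rw [← h10]; abel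
            rw [heq2]
            exact norm_add_le _ _
          have h12 : ‖zbar - projZ x‖ ≤ ‖x - zbar‖ + δ1/4 := by
            have h := norm_add_le (zbar - x) (x - projZ x)
            rw [sub_add_sub_cancel] at h
            rw [norm_sub_rev zbar x] at h
            linarith
          rw [div_le_iff₀ hpos]
          have hnum : ‖G x - toE (H'.mulVec (x - zbar))‖ ≤ 6 * ‖x - zbar‖ := by
            nlinarith [h11, h2', hfar_bound, h12, hnear, hδ10]
          linarith
      -- apply the supremum bound at the projected Newton point
      have hzsZ : projZ (projA x H x) ∈ Z := hprojZmem _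
      have hxzs_pos : 0 < ‖x - projZ (projA x H x)‖ := by
        rw [norm_pos_iff]
        exact sub_ne_zero.mpr (fun h => hxZ (h ▸ hzsZ))
      have hcmem : ‖G x - toE (H.mulVec (x - projZ (projA x H x)))‖
          / ‖x - projZ (projA x H x)‖ ∈ S :=
        ⟨projZ (projA x H x), hzsZ, H, hH, rfl⟩
      have hcle : ‖G x - toE (H.mulVec (x - projZ (projA x H x)))‖
          / ‖x - projZ (projA x H x)‖ ≤ newtonConst G HG Z x := by
        rw [hnc]; exact le_csSup hBdd hcmem
      have hcnn : 0 ≤ newtonConst G HG Z x := by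
        rw [hnc]
        apply Real.sSup_nonneg
        rintro r ⟨zbar, _, H', _, rfl⟩
        positivity
      have hresid : ‖G x - toE (H.mulVec (x - projZ (projA x H x)))‖
          ≤ newtonConst G HG Z x * ‖x - projZ (projA x H x)‖ :=
        (div_le_iff₀ hxzs_pos).mp hcle
      exact hcore x (lt_trans hd hδsgc) H hH (newtonConst G HG Z x) hcnn hresid
  · -- Statement (ii): superlinear convergence of the Newton iterates
    intro xs hx0 hseq
    have hx0' : infDist (xs 0) Z < δs := hx0
    -- a single step at ε = 1/(2 K')
    have hhalf : ∀ k, infDist (xs k) Z < δs →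
        infDist (xs (k+1)) Z ≤ (1/2) * infDist (xs k) Z := by
      intro k hk
      obtain ⟨H, hH, hxsk⟩ := hseq k
      have hAd : A * infDist (xs k) Z ≤ δ2 := by
        have := mul_le_mul_of_nonneg_left hk.le hA0.le
        linarith
      have hresid : ‖G (xs k) - toE (H.mulVec (xs k - projZ (projA (xs k) H (xs k))))‖
          ≤ (1 / (2 * K')) * ‖xs k - projZ (projA (xs k) H (xs k))‖ := by
        apply hND2 (xs k) _ (hprojZmem _) _ H hH
        exact le_trans (hxzs_le (xs k) H hH) hAd
      have h := hcore (xs k) (lt_trans hk hδsgc) H hH (1 / (2 * K')) (by positivity) hresid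
      rw [hxsk]
      have heq : (1 / (2 * K')) * K' = 1/2 := by field_simp [hK'pos.ne']
      calc infDist (projA (xs k) H (xs k)) Z ≤ (1 / (2 * K')) * K' * infDist (xs k) Z := h
        _ = (1/2) * infDist (xs k) Z := by rw [heq]
    -- the iterates stay in the neighborhood and decay geometrically
    have hdecay : ∀ k, infDist (xs k) Z ≤ (1/2)^k * infDist (xs 0) Z ∧ infDist (xs k) Z < δs := by
      intro k
      induction k with
      | zero => exact ⟨by simp, hx0'⟩
      | succ k ih =>
        have h12 := hhalf k ih.2
        constructor
        · calc infDist (xs (k+1)) Z ≤ (1/2) * infDist (xs k) Z := h12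
            _ ≤ (1/2) * ((1/2)^k * infDist (xs 0) Z) := by
                apply mul_le_mul_of_nonneg_left ih.1 (by norm_num)
            _ = (1/2)^(k+1) * infDist (xs 0) Z := by ring
        · have := infDist_nonneg (x := xs k) (s := Z)
          linarith [ih.2]
    -- the contraction factors
    refine ⟨fun k => if infDist (xs k) Z = 0 then 0
      else infDist (xs (k+1)) Z / infDist (xs k) Z, ?_, ?_⟩
    · -- tends to zero
      rw [Metric.tendsto_atTop]
      intro ε' hε'
      have hKp : 0 < (ε'/2) / K' := by positivity
      obtain ⟨δε, hδε0, hNDe⟩ := hND ((ε'/2) / K') hKp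
      obtain ⟨N, hN⟩ := exists_pow_lt_of_lt_one (show (0:ℝ) < δε / (A * δs) from by positivity)
        (show (1:ℝ)/2 < 1 from by norm_num)
      refine ⟨N, fun k hk => ?_⟩
      have hck_nonneg : 0 ≤ (if infDist (xs k) Z = 0 then (0:ℝ)
          else infDist (xs (k+1)) Z / infDist (xs k) Z) := by
        split
        · exact le_rfl
        · exact div_nonneg infDist_nonneg infDist_nonneg
      -- the step estimate at level (ε'/2)/K'
      have hstepk : infDist (xs (k+1)) Z ≤ (ε'/2) / K' * K' * infDist (xs k) Z := by
        obtain ⟨H, hH, hxsk⟩ := hseq k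
        have hdk := hdecay k
        have hpowk : (1/2:ℝ)^k ≤ (1/2:ℝ)^N :=
          pow_le_pow_of_le_one (by norm_num) (by norm_num) hk
        have hdkb : infDist (xs k) Z ≤ (1/2)^N * δs := by
          calc infDist (xs k) Z ≤ (1/2)^k * infDist (xs 0) Z := hdk.1
            _ ≤ (1/2)^k * δs := by
                apply mul_le_mul_of_nonneg_left hx0'.le (by positivity)
            _ ≤ (1/2)^N * δs := mul_le_mul_of_nonneg_right hpowk hδs0.le
        have hAd : A * infDist (xs k) Z ≤ δε := by
          have h1 : A * infDist (xs k) Z ≤ A * ((1/2)^N * δs) :=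
            mul_le_mul_of_nonneg_left hdkb hA0.le
          have h2 : (1/2:ℝ)^N * (A * δs) < δε :=
            (lt_div_iff₀ (show (0:ℝ) < A * δs from by positivity)).mp hN
          nlinarith [h1, h2]
        have hresid : ‖G (xs k) - toE (H.mulVec (xs k - projZ (projA (xs k) H (xs k))))‖
            ≤ ((ε'/2) / K') * ‖xs k - projZ (projA (xs k) H (xs k))‖ := by
          apply hNDe (xs k) _ (hprojZmem _) _ H hH
          exact le_trans (hxzs_le (xs k) H hH) hAd
        have h := hcore (xs k) (lt_trans hdk.2 hδsgc) H hH ((ε'/2) / K') hKp.le hresid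
        rw [hxsk]
        exact h
      have heqK : (ε'/2) / K' * K' = ε'/2 := div_mul_cancel₀ _ hK'pos.ne'
      rw [heqK] at hstepk
      show dist (if infDist (xs k) Z = 0 then (0:ℝ)
        else infDist (xs (k+1)) Z / infDist (xs k) Z) 0 < ε'
      rw [Real.dist_eq, sub_zero, abs_of_nonneg hck_nonneg]
      by_cases h0 : infDist (xs k) Z = 0
      · rw [if_pos h0]; linarith
      · rw [if_neg h0]
        have hdkpos : 0 < infDist (xs k) Z :=
          lt_of_le_of_ne infDist_nonneg (Ne.symm h0)
        rw [div_lt_iff₀ hdkpos]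
        calc infDist (xs (k+1)) Z ≤ ε'/2 * infDist (xs k) Z := hstepk
          _ < ε' * infDist (xs k) Z := by
              apply mul_lt_mul_of_pos_right _ hdkpos
              linarith
    · -- per-step inequality
      intro k
      show infDist (xs (k+1)) Z ≤ (if infDist (xs k) Z = 0 then (0:ℝ)
        else infDist (xs (k+1)) Z / infDist (xs k) Z) * infDist (xs k) Z
      by_cases h0 : infDist (xs k) Z = 0
      · rw [if_pos h0, zero_mul]
        have hxkZ : xs k ∈ Z := (hZclosed.mem_iff_infDist_zero hZne).mpr h0
        obtain ⟨H, hH, hxsk⟩ := hseq k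
        rw [hxsk, hfix (xs k) hxkZ H hH, infDist_zero_of_mem hxkZ]
      · rw [if_neg h0, div_mul_cancel₀ _ h0]
end
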